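/- arXiv:2507.07150 — 4 statements merged into one kernel-verified Lean document; each statement's English description precedes it below -/
import Mathlib

section
/- If P is uniform on the set of nondecreasing sequences in {0,...,n}^m, then for any threshold ℓ ∈ {0,...,n} and k ∈ {0,...,m}, the probability that exactly k of the coordinates P(1),...,P(m) are ≥ ℓ equals binomial(ℓ-1+m-k, m-k) * binomial(n-ℓ+k, k) / binomial(n+m, m). -/
open MeasureTheory

noncomputable instance (n m : ℕ) : Fintype {f : Fin m → Fin (n + 1) // Monotone f} :=
  Fintype.ofFinite _

instance (n m : ℕ) : Nonempty {f : Fin m → Fin (n + 1) // Monotone f} :=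
  ⟨⟨fun _ => 0, monotone_const⟩⟩


open Finset

lemma sorted_get_mono {α : Type*} [Preorder α] {l : List α} (h : l.Pairwise (· ≤ ·)) :
    Monotone fun i : Fin l.length => l.get i := by
  intro a b hab
  rcases eq_or_lt_of_le hab with rfl | hlt
  · exact le_rfl
  · exact List.pairwise_iff_get.mp h a b hlt

/-- Monotone functions `Fin m → α` correspond to multisets of size `m`. -/
noncomputable def monoEquivSym (α : Type*) [LinearOrder α] (m : ℕ) :
    {f : Fin m → α // Monotone f} ≃ Sym α m where
  toFun f := ⟨(List.ofFn f.1 : Multiset α), by simp⟩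
  invFun s := ⟨fun j => (s.1.sort (· ≤ ·)).get (j.cast (by simp [Multiset.length_sort, s.2])),
    fun a b hab => sorted_get_mono (Multiset.pairwise_sort _ _) (Fin.le_def.mpr (Fin.le_def.mp hab))⟩
  left_inv := by
    rintro ⟨f, hf⟩
    ext j
    have h1 : (((List.ofFn f : Multiset α)).sort (· ≤ ·)) = List.ofFn f :=
      List.Perm.eq_of_pairwise'
        (Multiset.pairwise_sort _ _) (List.sortedLE_iff_pairwise.mp ((List.sortedLE_ofFn_iff).mpr hf))
        (Multiset.coe_eq_coe.mp (Multiset.sort_eq _ _))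
    simp only
    rw [List.get_of_eq h1]
    simp
    rfl
  right_inv := by
    rintro ⟨s, hs⟩
    apply Subtype.ext
    simp only
    conv_rhs => rw [← Multiset.sort_eq s (· ≤ ·)]
    congr 1
    apply List.ext_get (by simp [hs])
    intro i h1 h2
    simp [List.get_ofFn]

theorem card_mono_fin (N m : ℕ) :
    Fintype.card {f : Fin m → Fin (N + 1) // Monotone f} = (N + m).choose m := by
  rw [Fintype.card_congr (monoEquivSym (Fin (N + 1)) m), Sym.card_sym_eq_choose]
  simp [Nat.add_sub_cancel]



lemma card_filter_le_val (m d : ℕ) (hd : d ≤ m) :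
    (Finset.univ.filter fun j : Fin m => d ≤ j.val).card = m - d := by
  rcases eq_or_lt_of_le hd with rfl | h
  · have he : (Finset.univ.filter fun j : Fin d => d ≤ j.val) = ∅ := by
      ext j; simp only [mem_filter, mem_univ, true_and, notMem_empty, iff_false]
      exact Nat.not_le.mpr j.isLt
    simp [he]
  · have he : (Finset.univ.filter fun j : Fin m => d ≤ j.val) = Finset.Ici (⟨d, h⟩ : Fin m) := by
      ext j; simp [Finset.mem_Ici, Fin.le_def]
    rw [he, Fin.card_Ici]

lemma mono_count_iff {n m : ℕ} (ℓ : Fin (n + 1)) {k : ℕ} (hk : k ≤ m)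
    {f : Fin m → Fin (n + 1)} (hf : Monotone f) :
    (Finset.univ.filter fun j : Fin m => ℓ ≤ f j).card = k ↔
      ∀ j : Fin m, (ℓ ≤ f j ↔ m - k ≤ j.val) := by
  constructor
  · intro hcard j
    constructor
    · intro hj
      have hsub : Finset.Ici j ⊆ Finset.univ.filter fun j : Fin m => ℓ ≤ f j := by
        intro x hx
        simp only [mem_filter, mem_univ, true_and]
        exact hj.trans (hf (Finset.mem_Ici.mp hx))
      have := Finset.card_le_card hsub
      rw [Fin.card_Ici, hcard] at this
      omega
    · intro hj
      by_contra hlt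
      have hsub : (Finset.univ.filter fun j : Fin m => ℓ ≤ f j) ⊆ Finset.Ioi j := by
        intro x hx
        simp only [mem_filter, mem_univ, true_and] at hx
        rw [Finset.mem_Ioi]
        by_contra hxj
        exact hlt (hx.trans (hf (not_lt.mp hxj)))
      have := Finset.card_le_card hsub
      rw [Fin.card_Ioi, hcard] at this
      have := j.isLt
      omega
  · intro hchar
    have he : (Finset.univ.filter fun j : Fin m => ℓ ≤ f j)
        = Finset.univ.filter fun j : Fin m => m - k ≤ j.val := by
      ext j; simp [hchar j]
    rw [he, card_filter_le_val m (m - k) (Nat.sub_le _ _)]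
    omega




section Glue

variable {n m k d l' : ℕ} (hd : d + k = m) (hl : l' + 1 ≤ n)
  (g : Fin d → Fin (l' + 1)) (h : Fin k → Fin (n - (l' + 1) + 1))

def glue : Fin m → Fin (n + 1) := fun j =>
  if hj : j.val < d then ⟨(g ⟨j.val, hj⟩).val, by have := (g ⟨j.val, hj⟩).isLt; omega⟩
  else ⟨l' + 1 + (h ⟨j.val - d, by omega⟩).val, by
    have := (h ⟨j.val - d, by omega⟩).isLt; omega⟩

lemma glue_val_lt {j : Fin m} (hj : j.val < d) :
    (glue hd hl g h j).val = (g ⟨j.val, hj⟩).val := by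
  rw [glue, dif_pos hj]

lemma glue_val_ge {j : Fin m} (hj : ¬ j.val < d) :
    (glue hd hl g h j).val = l' + 1 + (h ⟨j.val - d, by omega⟩).val := by
  rw [glue, dif_neg hj]

lemma glue_mono (hg : Monotone g) (hh : Monotone h) : Monotone (glue hd hl g h) := by
  intro a b hab
  rw [Fin.le_def] at hab
  rw [Fin.le_def]
  by_cases ha : a.val < d <;> by_cases hb : b.val < d
  · rw [glue_val_lt hd hl g h ha, glue_val_lt hd hl g h hb]
    exact hg (show (⟨a.val, ha⟩ : Fin d) ≤ ⟨b.val, hb⟩ from hab)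
  · rw [glue_val_lt hd hl g h ha, glue_val_ge hd hl g h hb]
    have := (g ⟨a.val, ha⟩).isLt; omega
  · omega
  · rw [glue_val_ge hd hl g h ha, glue_val_ge hd hl g h hb]
    have h2 := hh (show (⟨a.val - d, by omega⟩ : Fin k) ≤ ⟨b.val - d, by omega⟩ from by
      rw [Fin.le_def]; simp only; omega)
    rw [Fin.le_def] at h2
    omega

lemma glue_ge_iff (ℓ : Fin (n + 1)) (hℓ : (ℓ : ℕ) = l' + 1) (j : Fin m) :
    ℓ ≤ glue hd hl g h j ↔ d ≤ j.val := by
  rw [Fin.le_def, hℓ]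
  by_cases hj : j.val < d
  · rw [glue_val_lt hd hl g h hj]
    have := (g ⟨j.val, hj⟩).isLt
    constructor <;> (intro; omega)
  · rw [glue_val_ge hd hl g h hj]
    constructor <;> (intro; omega)

lemma glue_count (ℓ : Fin (n + 1)) (hℓ : (ℓ : ℕ) = l' + 1) :
    (Finset.univ.filter fun j : Fin m => ℓ ≤ glue hd hl g h j).card = k := by
  have he : (Finset.univ.filter fun j : Fin m => ℓ ≤ glue hd hl g h j)
      = Finset.univ.filter fun j : Fin m => d ≤ j.val := by
    ext j
    simp only [mem_filter, mem_univ, true_and]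
    exact glue_ge_iff hd hl g h ℓ hℓ j
  rw [he, card_filter_le_val m d (by omega)]
  omega

lemma glue_apply_g (i : Fin d) :
    (glue hd hl g h ⟨i.val, by omega⟩).val = (g i).val := by
  rw [glue_val_lt hd hl g h (show (⟨i.val, by omega⟩ : Fin m).val < d from i.isLt)]

lemma glue_apply_h (i : Fin k) :
    (glue hd hl g h ⟨d + i.val, by omega⟩).val = l' + 1 + (h i).val := by
  rw [glue_val_ge hd hl g h (by simp)]
  congr 2
  exact Fin.ext (by simp)

end Glue

theorem card_event_pos (n m k d l' : ℕ) (hd : d + k = m) (hl : l' + 1 ≤ n)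
    (ℓ : Fin (n + 1)) (hℓ : (ℓ : ℕ) = l' + 1) :
    Fintype.card ({g : Fin d → Fin (l' + 1) // Monotone g} ×
        {h : Fin k → Fin (n - (l' + 1) + 1) // Monotone h})
      = Fintype.card {a : {f : Fin m → Fin (n + 1) // Monotone f} //
          (Finset.univ.filter fun j : Fin m => ℓ ≤ a.1 j).card = k} := by
  apply Fintype.card_of_bijective (f := fun gh =>
    (⟨⟨glue hd hl gh.1.1 gh.2.1, glue_mono hd hl _ _ gh.1.2 gh.2.2⟩,
      glue_count hd hl _ _ ℓ hℓ⟩ : {a : {f : Fin m → Fin (n + 1) // Monotone f} //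
          (Finset.univ.filter fun j : Fin m => ℓ ≤ a.1 j).card = k}))
  constructor
  · rintro ⟨⟨g1, hg1⟩, ⟨h1, hh1⟩⟩ ⟨⟨g2, hg2⟩, ⟨h2, hh2⟩⟩ hgh
    have heq : glue hd hl g1 h1 = glue hd hl g2 h2 := by
      have := Subtype.ext_iff.mp hgh
      exact Subtype.ext_iff.mp this
    have hfe : ∀ j : Fin m, (glue hd hl g1 h1 j).val = (glue hd hl g2 h2 j).val := by
      intro j; rw [heq]
    refine Prod.ext (Subtype.ext ?_) (Subtype.ext ?_)
    · dsimp only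
      funext i
      apply Fin.ext
      have hi := hfe ⟨i.val, by omega⟩
      rw [glue_apply_g hd hl g1 h1 i, glue_apply_g hd hl g2 h2 i] at hi
      exact hi
    · dsimp only
      funext i
      apply Fin.ext
      have hi := hfe ⟨d + i.val, by omega⟩
      rw [glue_apply_h hd hl g1 h1 i, glue_apply_h hd hl g2 h2 i] at hi
      omega
  · rintro ⟨⟨f, hf⟩, hcount⟩
    have hchar : ∀ j : Fin m, ℓ ≤ f j ↔ d ≤ j.val := by
      have hiff := (mono_count_iff ℓ (by omega) hf).mp hcount
      intro j; rw [hiff j]; omega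
    have hflt : ∀ (i : ℕ) (hi : i < d), (f ⟨i, by omega⟩).val < l' + 1 := by
      intro i hi
      have h1 : ¬ ℓ ≤ f ⟨i, by omega⟩ := by rw [hchar]; simpa using hi
      rw [Fin.le_def, hℓ] at h1
      omega
    have hfge : ∀ (i : ℕ) (hi : i < k), l' + 1 ≤ (f ⟨d + i, by omega⟩).val := by
      intro i hi
      have h1 : ℓ ≤ f ⟨d + i, by omega⟩ := by rw [hchar]; simp
      rw [Fin.le_def, hℓ] at h1
      exact h1
    refine ⟨(⟨fun i => ⟨(f ⟨i.val, by omega⟩).val, hflt i.val i.isLt⟩, ?_⟩,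
             ⟨fun i => ⟨(f ⟨d + i.val, by omega⟩).val - (l' + 1), ?_⟩, ?_⟩), ?_⟩
    · intro i1 i2 h12
      exact hf (show (⟨i1.val, by omega⟩ : Fin m) ≤ ⟨i2.val, by omega⟩ from h12)
    · have := (f ⟨d + i.val, by omega⟩).isLt
      have := hfge i.val i.isLt
      omega
    · intro i1 i2 h12
      rw [Fin.le_def]
      simp only
      have h2 := hf (show (⟨d + i1.val, by omega⟩ : Fin m) ≤ ⟨d + i2.val, by omega⟩ from by
        rw [Fin.le_def]; simp only; omega)
      rw [Fin.le_def] at h2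
      omega
    · apply Subtype.ext
      apply Subtype.ext
      funext j
      apply Fin.ext
      simp only
      by_cases hj : j.val < d
      · rw [glue_val_lt hd hl _ _ hj]
      · rw [glue_val_ge hd hl _ _ hj]
        simp only
        have h1 : ℓ ≤ f j := by rw [hchar]; omega
        rw [Fin.le_def, hℓ] at h1
        rw [show (⟨d + (j.val - d), by omega⟩ : Fin m) = j from
          Fin.ext (show d + (j.val - d) = j.val by omega)]
        omega

lemma card_event (n m : ℕ) (ℓ : Fin (n + 1)) (k : ℕ) (hk : k ≤ m) :
    Fintype.card {a : {f : Fin m → Fin (n + 1) // Monotone f} //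
        (Finset.univ.filter fun j : Fin m => ℓ ≤ a.1 j).card = k}
      = ((ℓ : ℕ) + m - k - 1).choose (m - k) * (n - (ℓ : ℕ) + k).choose k := by
  rcases Nat.eq_zero_or_pos (ℓ : ℕ) with h0 | hpos
  · have hall : ∀ a : {f : Fin m → Fin (n + 1) // Monotone f},
        (Finset.univ.filter fun j : Fin m => ℓ ≤ a.1 j).card = m := by
      intro a
      have he : (Finset.univ.filter fun j : Fin m => ℓ ≤ a.1 j) = Finset.univ := by
        ext j
        simp only [Finset.mem_filter, Finset.mem_univ, true_and, iff_true]
        rw [Fin.le_def, h0]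
        exact Nat.zero_le _
      rw [he, Finset.card_univ, Fintype.card_fin]
    rcases eq_or_lt_of_le hk with rfl | hlt
    · rw [Fintype.card_congr (Equiv.subtypeUnivEquiv (fun a => hall a))]
      rw [card_mono_fin n k]
      simp [h0, Nat.sub_self]
    · have : IsEmpty {a : {f : Fin m → Fin (n + 1) // Monotone f} //
          (Finset.univ.filter fun j : Fin m => ℓ ≤ a.1 j).card = k} :=
        ⟨fun a => by have := a.2; rw [hall a.1] at this; omega⟩
      rw [Fintype.card_eq_zero, Nat.choose_eq_zero_of_lt (by omega), zero_mul]
  · obtain ⟨l', hℓ'⟩ : ∃ l', (ℓ : ℕ) = l' + 1 := ⟨(ℓ : ℕ) - 1, by omega⟩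
    have hl : l' + 1 ≤ n := by have := ℓ.isLt; omega
    rw [← card_event_pos n m k (m - k) l' (by omega) hl ℓ hℓ']
    rw [Fintype.card_prod, card_mono_fin l' (m - k), card_mono_fin (n - (l' + 1)) k]
    rw [show l' + (m - k) = (ℓ : ℕ) + m - k - 1 by omega,
      show n - (l' + 1) + k = n - (ℓ : ℕ) + k by omega]

/-- If `P` is uniform on the set of nondecreasing sequences in `{0,...,n}^m`, then for any
threshold `ℓ ∈ {0,...,n}` and `k ∈ {0,...,m}`, the probability that exactly `k` of the
coordinates `P(1),...,P(m)` are `≥ ℓ` equals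
`choose(ℓ-1+m-k, m-k) * choose(n-ℓ+k, k) / choose(n+m, m)`
(the first binomial coefficient `(ℓ-1+m-k).choose (m-k)` is written `(ℓ+m-k-1).choose (m-k)`,
interpreted as `0` when `ℓ = 0` and `k < m`, matching the generalized convention). -/
theorem uniform_monotone_count_ge_threshold (n m : ℕ) (ℓ : Fin (n + 1)) (k : ℕ) (hk : k ≤ m) :
    (((PMF.uniformOfFintype {f : Fin m → Fin (n + 1) // Monotone f}).toMeasure
        {a | (Finset.univ.filter fun j : Fin m => ℓ ≤ a.1 j).card = k}).toReal)
      = ((((ℓ : ℕ) + m - k - 1).choose (m - k) : ℝ) *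
          ((n - (ℓ : ℕ) + k).choose k : ℝ)) / ((n + m).choose m : ℝ) := by
  classical
  rw [PMF.toMeasure_apply_fintype]
  have hrw : ∀ a : {f : Fin m → Fin (n + 1) // Monotone f},
      Set.indicator {a | (Finset.univ.filter fun j : Fin m => ℓ ≤ a.1 j).card = k}
        (PMF.uniformOfFintype {f : Fin m → Fin (n + 1) // Monotone f}) a
      = if (Finset.univ.filter fun j : Fin m => ℓ ≤ a.1 j).card = k
          then (Fintype.card {f : Fin m → Fin (n + 1) // Monotone f} : ENNReal)⁻¹ else 0 := by
    intro a
    by_cases ha : (Finset.univ.filter fun j : Fin m => ℓ ≤ a.1 j).card = k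
    · rw [if_pos ha, Set.indicator_of_mem (show a ∈ {a : {f : Fin m → Fin (n + 1) // Monotone f} |
        (Finset.univ.filter fun j : Fin m => ℓ ≤ a.1 j).card = k} from ha),
        PMF.uniformOfFintype_apply]
    · rw [if_neg ha, Set.indicator_of_notMem (show a ∉ {a : {f : Fin m → Fin (n + 1) // Monotone f} |
        (Finset.univ.filter fun j : Fin m => ℓ ≤ a.1 j).card = k} from ha)]
  simp only [hrw]
  rw [Finset.sum_ite, Finset.sum_const, Finset.sum_const_zero, add_zero, nsmul_eq_mul]
  rw [← Fintype.card_subtype, card_event n m ℓ k hk, card_mono_fin n m]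
  rw [ENNReal.toReal_mul, ENNReal.toReal_inv]
  simp only [ENNReal.toReal_natCast]
  rw [Nat.cast_mul]
  rw [div_eq_mul_inv]
end

section
/- Let S_1,...,S_{n+m} be exchangeable real-valued random variables with no ties almost surely, and define p_j = (1/n) · #{ i ∈ {1,...,n} : S_{n+j} ≥ S_i } for j ∈ {1,...,m}. Then the vector of ordered p-values (p_(1),...,p_(m)) is uniformly distributed on A_{n,m} = { a ∈ {i/n : 0 ≤ i ≤ n}^m : a_1 ≤ ... ≤ a_m }. -/
open MeasureTheory
open Finset Equiv
open scoped ENNReal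

namespace OPU
variable {n m : ℕ}

lemma card_filter_val_lt (n c : ℕ) (hc : c ≤ n) :
    (Finset.univ.filter fun i : Fin n => (i : ℕ) < c).card = c := by
  have : (Finset.univ.filter fun i : Fin n => (i : ℕ) < c) =
      (Finset.univ : Finset (Fin c)).map ⟨Fin.castLE hc, Fin.castLE_injective hc⟩ := by
    ext k
    simp only [mem_filter, mem_univ, true_and, mem_map, Function.Embedding.coeFn_mk]
    constructor
    · intro h; exact ⟨⟨(k : ℕ), h⟩, rfl⟩
    · rintro ⟨i, rfl⟩; exact i.isLt
  rw [this, Finset.card_map, Finset.card_univ, Fintype.card_fin]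

/-- number of training indices strictly below test index `j` in rank. -/
def cnt (τ : Perm (Fin (n + m))) (j : Fin m) : ℕ :=
  (Finset.univ.filter fun i : Fin n => τ (Fin.castAdd m i) < τ (Fin.natAdd n j)).card

lemma cnt_le (τ : Perm (Fin (n + m))) (j : Fin m) : cnt τ j ≤ n := by
  refine le_trans (Finset.card_filter_le _ _) ?_
  simp

noncomputable def pval (τ : Perm (Fin (n + m))) : Fin m → ℝ := fun j => (cnt τ j : ℝ) / n

noncomputable def Φ (τ : Perm (Fin (n + m))) : Fin m → Fin (n + 1) :=
  fun k => ⟨cnt τ (Tuple.sort (pval τ) k), Nat.lt_succ_of_le (cnt_le τ _)⟩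

lemma div_le_div_iff_nat (hn : 0 < n) {a b : ℕ} : (a : ℝ) / n ≤ (b : ℝ) / n ↔ a ≤ b := by
  rw [div_le_div_iff_of_pos_right (by exact_mod_cast hn), Nat.cast_le]

lemma div_eq_div_iff_nat (hn : 0 < n) {a b : ℕ} : (a : ℝ) / n = (b : ℝ) / n ↔ a = b := by
  constructor
  · intro h
    have hn' : (n:ℝ) ≠ 0 := by exact_mod_cast hn.ne'
    field_simp at h
    exact_mod_cast h
  · rintro rfl; rfl

lemma monotone_Φ (hn : 0 < n) (τ : Perm (Fin (n + m))) : Monotone (Φ τ) := by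
  intro k k' hk
  have h := Tuple.monotone_sort (pval τ) hk
  simp only [Function.comp_apply, pval] at h
  have := (div_le_div_iff_nat hn).mp h
  simpa [Φ, Fin.le_def] using this

noncomputable def F (τ : Perm (Fin (n + m))) : Fin m → ℝ := pval τ ∘ Tuple.sort (pval τ)

lemma F_eq (τ : Perm (Fin (n + m))) : F τ = fun k => ((Φ τ k : ℕ) : ℝ) / n := rfl


/-- action of `Perm (Fin n) × Perm (Fin m)` -/
def eAct (π : Perm (Fin n)) (κ : Perm (Fin m)) : Perm (Fin (n + m)) :=
  finSumFinEquiv.permCongr (Equiv.sumCongr π κ)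

lemma eAct_castAdd (π : Perm (Fin n)) (κ : Perm (Fin m)) (i : Fin n) :
    eAct π κ (Fin.castAdd m i) = Fin.castAdd m (π i) := by
  simp [eAct, Equiv.permCongr_apply]

lemma eAct_natAdd (π : Perm (Fin n)) (κ : Perm (Fin m)) (j : Fin m) :
    eAct π κ (Fin.natAdd n j) = Fin.natAdd n (κ j) := by
  simp [eAct, Equiv.permCongr_apply]

lemma cnt_act (τ : Perm (Fin (n + m))) (π : Perm (Fin n)) (κ : Perm (Fin m)) (j : Fin m) :
    cnt ((eAct π κ).trans τ) j = cnt τ (κ j) := by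
  unfold cnt
  refine Finset.card_equiv π (fun i => ?_)
  simp [eAct_castAdd, eAct_natAdd]

lemma pval_act (τ : Perm (Fin (n + m))) (π : Perm (Fin n)) (κ : Perm (Fin m)) :
    pval ((eAct π κ).trans τ) = pval τ ∘ κ := by
  funext j
  simp [pval, cnt_act]

lemma F_act (τ : Perm (Fin (n + m))) (π : Perm (Fin n)) (κ : Perm (Fin m)) :
    F ((eAct π κ).trans τ) = F τ := by
  rw [F, pval_act]
  exact Tuple.comp_perm_comp_sort_eq_comp_sort

lemma Φ_act (hn : 0 < n) (τ : Perm (Fin (n + m))) (π : Perm (Fin n)) (κ : Perm (Fin m)) :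
    Φ ((eAct π κ).trans τ) = Φ τ := by
  funext k
  have h := congrFun (F_act τ π κ) k
  rw [F_eq, F_eq] at h
  exact Fin.ext ((div_eq_div_iff_nat hn).mp h)


def tst (τ : Perm (Fin (n + m))) : Finset (Fin (n + m)) :=
  Finset.univ.image fun j : Fin m => τ (Fin.natAdd n j)

lemma val_natAdd_eq (τ : Perm (Fin (n + m))) (j : Fin m) :
    (τ (Fin.natAdd n j) : ℕ) =
      cnt τ j +
        (Finset.univ.filter fun j' : Fin m =>
          τ (Fin.natAdd n j') < τ (Fin.natAdd n j)).card := by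
  classical
  set t := τ (Fin.natAdd n j) with ht
  have h1 : (Finset.univ.filter fun k : Fin (n + m) => k < t).card = (t : ℕ) := by
    rw [show (Finset.univ.filter fun k : Fin (n + m) => k < t)
        = (Finset.univ.filter fun k : Fin (n + m) => (k : ℕ) < (t : ℕ)) from by
      ext k; simp only [Finset.mem_filter, Finset.mem_univ, true_and, Fin.lt_def]]
    exact card_filter_val_lt _ _ t.isLt.le
  have h2 : (Finset.univ.filter fun x : Fin (n + m) => τ x < t).card
      = (Finset.univ.filter fun k : Fin (n + m) => k < t).card :=
    Finset.card_equiv τ (fun x => by simp)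
  have h3 : (Finset.univ.filter fun x : Fin (n + m) => τ x < t).card
      = ∑ y : Fin n ⊕ Fin m, (if τ (finSumFinEquiv y) < t then 1 else 0) := by
    rw [Finset.card_filter]
    exact (Equiv.sum_comp finSumFinEquiv (fun x => if τ x < t then 1 else 0)).symm
  rw [Fintype.sum_sum_type] at h3
  simp only [finSumFinEquiv_apply_left, finSumFinEquiv_apply_right] at h3
  have h4 : cnt τ j = ∑ i : Fin n, (if τ (Fin.castAdd m i) < t then 1 else 0) :=
    Finset.card_filter _ _
  have h5 : (Finset.univ.filter fun j' : Fin m =>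
      τ (Fin.natAdd n j') < t).card
      = ∑ j' : Fin m, (if τ (Fin.natAdd n j') < t then 1 else 0) :=
    Finset.card_filter _ _
  have h3' : (Finset.univ.filter fun x : Fin (n + m) => τ x < t).card
      = (∑ i : Fin n, (if τ (Fin.castAdd m i) < t then 1 else 0))
        + ∑ j' : Fin m, (if τ (Fin.natAdd n j') < t then 1 else 0) := h3
  omega

lemma natAdd_injective : Function.Injective (Fin.natAdd n (m := m)) := by
  intro a b h
  have := congrArg Fin.val h
  simp only [Fin.coe_natAdd] at this
  exact Fin.ext (by omega)

lemma castAdd_injective : Function.Injective (Fin.castAdd (n := n) m) := by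
  intro a b h
  have := congrArg Fin.val h
  simp only [Fin.coe_castAdd] at this
  exact Fin.ext this

lemma castAdd_ne_natAdd (i : Fin n) (j : Fin m) : Fin.castAdd m i ≠ Fin.natAdd n j := by
  intro h
  have := congrArg Fin.val h
  simp only [Fin.coe_castAdd, Fin.coe_natAdd] at this
  omega

lemma tst_eq (hn : 0 < n) (τ : Perm (Fin (n + m))) :
    tst τ = Finset.univ.image (fun k : Fin m =>
      (⟨(Φ τ k : ℕ) + (k : ℕ), by
        have h1 := (Φ τ k).isLt; have h2 := k.isLt; omega⟩ : Fin (n + m))) := by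
  classical
  set tv : Fin m → Fin (n + m) := fun j => τ (Fin.natAdd n j) with htvdef
  set ρ : Perm (Fin m) := Tuple.sort tv with hρdef
  have htv : StrictMono (tv ∘ ρ) := by
    refine (Tuple.monotone_sort tv).strictMono_of_injective ?_
    exact (τ.injective.comp natAdd_injective).comp ρ.injective
  have hcntρ : Monotone (cnt τ ∘ ρ) := by
    intro k k' hk
    show cnt τ (ρ k) ≤ cnt τ (ρ k')
    unfold cnt
    refine Finset.card_le_card ?_
    intro i hi
    simp only [Finset.mem_filter, Finset.mem_univ, true_and] at hi ⊢
    exact lt_of_lt_of_le hi (htv.monotone hk)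
  have hσmono : Monotone (cnt τ ∘ (Tuple.sort (pval τ))) := by
    intro k k' hk
    have h := Tuple.monotone_sort (pval τ) hk
    simp only [Function.comp_apply, pval] at h
    exact (div_le_div_iff_nat hn).mp h
  have huniq : cnt τ ∘ (Tuple.sort (pval τ)) = cnt τ ∘ ρ :=
    Tuple.unique_monotone hσmono hcntρ
  have hrank : ∀ k : Fin m, (tv (ρ k) : ℕ) = cnt τ (ρ k) + (k : ℕ) := by
    intro k
    have h := val_natAdd_eq τ (ρ k)
    have e1 : (Finset.univ.filter fun k' : Fin m => tv (ρ k') < tv (ρ k)).card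
        = (Finset.univ.filter fun j' : Fin m => tv j' < tv (ρ k)).card :=
      Finset.card_equiv ρ (fun k' => by simp)
    have e2 : (Finset.univ.filter fun k' : Fin m => tv (ρ k') < tv (ρ k))
        = (Finset.univ.filter fun k' : Fin m => (k' : ℕ) < (k : ℕ)) := by
      ext k'
      simp only [Finset.mem_filter, Finset.mem_univ, true_and]
      rw [show tv (ρ k') < tv (ρ k) ↔ (tv ∘ ρ) k' < (tv ∘ ρ) k from Iff.rfl,
        htv.lt_iff_lt, Fin.lt_def]
    rw [e2, card_filter_val_lt _ _ k.isLt.le] at e1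
    simp only [htvdef] at e1 h ⊢
    omega
  have himg : tst τ = Finset.univ.image (tv ∘ ρ) := by
    ext x
    simp only [tst, Finset.mem_image, Finset.mem_univ, true_and, Function.comp_apply]
    constructor
    · rintro ⟨j, rfl⟩; exact ⟨ρ.symm j, by simp [htvdef]⟩
    · rintro ⟨k, rfl⟩; exact ⟨ρ k, rfl⟩
  rw [himg]
  refine Finset.image_congr ?_
  intro k _
  refine Fin.ext ?_
  have : (Φ τ k : ℕ) = (cnt τ ∘ ρ) k := by
    rw [← huniq]; rfl
  simp only [Function.comp_apply] at this
  show ((tv ∘ ρ) k : ℕ) = (Φ τ k : ℕ) + (k : ℕ)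
  rw [show ((tv ∘ ρ) k : ℕ) = (tv (ρ k) : ℕ) from rfl, hrank k, this]

lemma tst_eq_of_Φ_eq (hn : 0 < n) {τ τ' : Perm (Fin (n + m))} (h : Φ τ = Φ τ') :
    tst τ = tst τ' := by
  rw [tst_eq hn τ, tst_eq hn τ']
  refine Finset.image_congr ?_
  intro k _
  exact Fin.ext (by simp only [h])


lemma eq_castAdd_or_natAdd (x : Fin (n + m)) :
    (∃ i : Fin n, x = Fin.castAdd m i) ∨ (∃ j : Fin m, x = Fin.natAdd n j) := by
  rcases h : finSumFinEquiv.symm x with i | j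
  · exact Or.inl ⟨i, by rw [← finSumFinEquiv_apply_left, ← h, Equiv.apply_symm_apply]⟩
  · exact Or.inr ⟨j, by rw [← finSumFinEquiv_apply_right, ← h, Equiv.apply_symm_apply]⟩

lemma exists_act_of_tst_eq {τ τ' : Perm (Fin (n + m))} (h : tst τ = tst τ') :
    ∃ (π : Perm (Fin n)) (κ : Perm (Fin m)), τ' = (eAct π κ).trans τ := by
  classical
  set δ : Perm (Fin (n + m)) := τ'.trans τ.symm with hδ
  have P1 : ∀ j : Fin m, ∃ j', δ (Fin.natAdd n j) = Fin.natAdd n j' := by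
    intro j
    have hmem : τ' (Fin.natAdd n j) ∈ tst τ := by
      rw [h]; exact Finset.mem_image_of_mem _ (Finset.mem_univ j)
    obtain ⟨j', -, hj'⟩ := Finset.mem_image.mp hmem
    exact ⟨j', by simp [hδ, Equiv.trans_apply, ← hj']⟩
  have P1' : ∀ j : Fin m, ∃ j', δ.symm (Fin.natAdd n j) = Fin.natAdd n j' := by
    intro j
    have hmem : τ (Fin.natAdd n j) ∈ tst τ' := by
      rw [← h]; exact Finset.mem_image_of_mem _ (Finset.mem_univ j)
    obtain ⟨j', -, hj'⟩ := Finset.mem_image.mp hmem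
    refine ⟨j', ?_⟩
    have : δ (Fin.natAdd n j') = Fin.natAdd n j := by
      simp [hδ, Equiv.trans_apply, hj']
    rw [← this, Equiv.symm_apply_apply]
  have P2 : ∀ i : Fin n, ∃ i', δ (Fin.castAdd m i) = Fin.castAdd m i' := by
    intro i
    rcases eq_castAdd_or_natAdd (δ (Fin.castAdd m i)) with ⟨i', hi'⟩ | ⟨j, hj⟩
    · exact ⟨i', hi'⟩
    · exfalso
      obtain ⟨j', hj'⟩ := P1' j
      have hx : δ.symm (Fin.natAdd n j) = Fin.castAdd m i := by
        rw [← hj, Equiv.symm_apply_apply]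
      rw [hj'] at hx
      exact castAdd_ne_natAdd i j' hx.symm
  choose π hπ using P2
  choose κ hκ using P1
  have hπinj : Function.Injective π := by
    intro a b hab
    have : δ (Fin.castAdd m a) = δ (Fin.castAdd m b) := by rw [hπ, hπ, hab]
    exact castAdd_injective (δ.injective this)
  have hκinj : Function.Injective κ := by
    intro a b hab
    have : δ (Fin.natAdd n a) = δ (Fin.natAdd n b) := by rw [hκ, hκ, hab]
    exact natAdd_injective (δ.injective this)
  refine ⟨Equiv.ofBijective π (Finite.injective_iff_bijective.mp hπinj),
      Equiv.ofBijective κ (Finite.injective_iff_bijective.mp hκinj), ?_⟩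
  ext x
  rcases eq_castAdd_or_natAdd x with ⟨i, rfl⟩ | ⟨j, rfl⟩
  · rw [Equiv.trans_apply, show (eAct (Equiv.ofBijective π _) (Equiv.ofBijective κ _))
        (Fin.castAdd m i) = Fin.castAdd m (π i) from eAct_castAdd _ _ i]
    have := hπ i
    rw [hδ] at this
    simp only [Equiv.trans_apply] at this
    exact congrArg Fin.val ((Equiv.symm_apply_eq τ).mp this)
  · rw [Equiv.trans_apply, show (eAct (Equiv.ofBijective π _) (Equiv.ofBijective κ _))
        (Fin.natAdd n j) = Fin.natAdd n (κ j) from eAct_natAdd _ _ j]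
    have := hκ j
    rw [hδ] at this
    simp only [Equiv.trans_apply] at this
    exact congrArg Fin.val ((Equiv.symm_apply_eq τ).mp this)


section Sect
variable {a : Fin m → Fin (n + 1)}

def bcount (a : Fin m → Fin (n + 1)) (i : ℕ) : ℕ :=
  (Finset.univ.filter fun j : Fin m => (a j : ℕ) ≤ i).card

lemma bcount_le (a : Fin m → Fin (n + 1)) (i : ℕ) : bcount a i ≤ m :=
  le_trans (Finset.card_filter_le _ _) (by simp)

lemma bcount_mono (a : Fin m → Fin (n + 1)) : Monotone (bcount a) := by
  intro i i' h
  exact Finset.card_le_card (fun j hj => by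
    simp only [Finset.mem_filter, Finset.mem_univ, true_and] at hj ⊢; omega)

lemma bcount_le_of_lt (ha : Monotone a) {i : ℕ} {j : Fin m} (h : i < (a j : ℕ)) :
    bcount a i ≤ (j : ℕ) := by
  have hsub : (Finset.univ.filter fun j' : Fin m => (a j' : ℕ) ≤ i)
      ⊆ Finset.univ.filter fun j' : Fin m => (j' : ℕ) < (j : ℕ) := by
    intro j' hj'
    simp only [Finset.mem_filter, Finset.mem_univ, true_and] at hj' ⊢
    by_contra hc
    have : j ≤ j' := by rw [Fin.le_def]; omega
    have := ha this
    rw [Fin.le_def] at this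
    omega
  have := Finset.card_le_card hsub
  rwa [card_filter_val_lt _ _ j.isLt.le] at this

lemma lt_bcount_of_le (ha : Monotone a) {i : ℕ} {j : Fin m} (h : (a j : ℕ) ≤ i) :
    (j : ℕ) < bcount a i := by
  have hsub : (Finset.univ.filter fun j' : Fin m => (j' : ℕ) < (j : ℕ) + 1)
      ⊆ Finset.univ.filter fun j' : Fin m => (a j' : ℕ) ≤ i := by
    intro j' hj'
    simp only [Finset.mem_filter, Finset.mem_univ, true_and] at hj' ⊢
    have : j' ≤ j := by rw [Fin.le_def]; omega
    have := ha this
    rw [Fin.le_def] at this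
    omega
  have := Finset.card_le_card hsub
  rwa [card_filter_val_lt _ _ (by omega : (j : ℕ) + 1 ≤ m)] at this

lemma secL (ha : Monotone a) (i : Fin n) (j : Fin m) :
    ((i : ℕ) + bcount a i < (a j : ℕ) + (j : ℕ)) ↔ (i : ℕ) < (a j : ℕ) := by
  constructor
  · intro h
    by_contra hc
    push_neg at hc
    have := lt_bcount_of_le ha hc
    omega
  · intro h
    have := bcount_le_of_lt ha h
    omega

def gsec (a : Fin m → Fin (n + 1)) : Fin n ⊕ Fin m → Fin (n + m) :=
  Sum.elim
    (fun i => ⟨(i : ℕ) + bcount a i, by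
      have h1 := i.isLt; have h2 := bcount_le a i; omega⟩)
    (fun j => ⟨(a j : ℕ) + (j : ℕ), by
      have h1 := (a j).isLt; have h2 := j.isLt; omega⟩)

lemma gsec_injective (ha : Monotone a) : Function.Injective (gsec a) := by
  intro x y hxy
  have hval := congrArg Fin.val hxy
  rcases x with i | j <;> rcases y with i' | j'
  · simp only [gsec, Sum.elim_inl] at hval
    have : (i : ℕ) = i' := by
      rcases lt_trichotomy (i : ℕ) (i' : ℕ) with h | h | h
      · have := bcount_mono a (le_of_lt h); omega
      · exact h
      · have := bcount_mono a (le_of_lt h); omega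
    exact congrArg Sum.inl (Fin.ext this)
  · exfalso
    simp only [gsec, Sum.elim_inl, Sum.elim_inr] at hval
    rcases lt_or_ge (i : ℕ) ((a j' : ℕ)) with h | h
    · have := (secL ha i j').mpr h; omega
    · have := lt_bcount_of_le ha h; omega
  · exfalso
    simp only [gsec, Sum.elim_inl, Sum.elim_inr] at hval
    rcases lt_or_ge (i' : ℕ) ((a j : ℕ)) with h | h
    · have := (secL ha i' j).mpr h; omega
    · have := lt_bcount_of_le ha h; omega
  · simp only [gsec, Sum.elim_inr] at hval
    have : (j : ℕ) = j' := by
      rcases lt_trichotomy (j : ℕ) (j' : ℕ) with h | h | h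
      · have := ha (le_of_lt (show j < j' from by rwa [Fin.lt_def])); rw [Fin.le_def] at this; omega
      · exact h
      · have := ha (le_of_lt (show j' < j from by rwa [Fin.lt_def])); rw [Fin.le_def] at this; omega
    exact congrArg Sum.inr (Fin.ext this)

noncomputable def sect (a : Fin m → Fin (n + 1)) (ha : Monotone a) : Perm (Fin (n + m)) :=
  Equiv.ofBijective (fun k => gsec a (finSumFinEquiv.symm k))
    (Finite.injective_iff_bijective.mp
      ((gsec_injective ha).comp finSumFinEquiv.symm.injective))

lemma sect_castAdd (ha : Monotone a) (i : Fin n) :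
    (sect a ha (Fin.castAdd m i) : ℕ) = (i : ℕ) + bcount a i := by
  simp [sect, Equiv.ofBijective_apply, finSumFinEquiv_symm_apply_castAdd, gsec]

lemma sect_natAdd (ha : Monotone a) (j : Fin m) :
    (sect a ha (Fin.natAdd n j) : ℕ) = (a j : ℕ) + (j : ℕ) := by
  simp [sect, Equiv.ofBijective_apply, finSumFinEquiv_symm_apply_natAdd, gsec]

lemma cnt_sect (ha : Monotone a) (j : Fin m) : cnt (sect a ha) j = (a j : ℕ) := by
  unfold cnt
  rw [show (Finset.univ.filter fun i : Fin n =>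
        sect a ha (Fin.castAdd m i) < sect a ha (Fin.natAdd n j))
      = Finset.univ.filter fun i : Fin n => (i : ℕ) < (a j : ℕ) from by
    ext i
    simp only [Finset.mem_filter, Finset.mem_univ, true_and, Fin.lt_def,
      sect_castAdd ha, sect_natAdd ha]
    exact secL ha i j]
  exact card_filter_val_lt _ _ (by have := (a j).isLt; omega)

lemma Φ_sect (hn : 0 < n) (ha : Monotone a) : Φ (sect a ha) = a := by
  have hp : pval (sect a ha) = fun j => ((a j : ℕ) : ℝ) / n := by
    funext j; simp [pval, cnt_sect ha]
  have hmono : Monotone (pval (sect a ha)) := by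
    rw [hp]
    intro j j' hj
    exact (div_le_div_iff_nat hn).mpr (by have := ha hj; rwa [Fin.le_def] at this)
  have hsorted : pval (sect a ha) ∘ (Tuple.sort (pval (sect a ha))) = pval (sect a ha) := by
    have := (Tuple.comp_sort_eq_comp_iff_monotone
      (f := pval (sect a ha)) (σ := Equiv.refl _)).mpr (by simpa using hmono)
    simpa using this.symm
  funext k
  refine Fin.ext ?_
  have h1 : pval (sect a ha) (Tuple.sort (pval (sect a ha)) k) = pval (sect a ha) k :=
    congrFun hsorted k
  have h2 : cnt (sect a ha) (Tuple.sort (pval (sect a ha)) k) = cnt (sect a ha) k :=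
    (div_eq_div_iff_nat hn).mp h1
  show cnt (sect a ha) (Tuple.sort (pval (sect a ha)) k) = (a k : ℕ)
  rw [h2, cnt_sect ha]

end Sect

lemma fiber_card (hn : 0 < n) (a : Fin m → Fin (n + 1)) (ha : Monotone a) :
    (Finset.univ.filter fun τ : Perm (Fin (n + m)) => Φ τ = a).card =
      Nat.factorial n * Nat.factorial m := by
  classical
  set τa := sect a ha with hτa
  have himg : (Finset.univ.filter fun τ : Perm (Fin (n + m)) => Φ τ = a)
      = Finset.univ.image (fun pk : Perm (Fin n) × Perm (Fin m) => (eAct pk.1 pk.2).trans τa) := by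
    ext τ'
    simp only [Finset.mem_filter, Finset.mem_univ, true_and, Finset.mem_image]
    constructor
    · intro hΦ
      have : Φ τ' = Φ τa := by rw [hΦ, Φ_sect hn ha]
      obtain ⟨π, κ, hpk⟩ := exists_act_of_tst_eq ((tst_eq_of_Φ_eq hn this).symm)
      exact ⟨⟨π, κ⟩, hpk.symm⟩
    · rintro ⟨⟨π, κ⟩, rfl⟩
      rw [Φ_act hn, Φ_sect hn ha]
  rw [himg, Finset.card_image_of_injective _ ?hinj, Finset.card_univ, Fintype.card_prod,
    Fintype.card_perm, Fintype.card_perm, Fintype.card_fin, Fintype.card_fin]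
  case hinj =>
    intro ⟨π, κ⟩ ⟨π', κ'⟩ hpk
    simp only at hpk
    have happ : ∀ x, (eAct π κ) x = (eAct π' κ') x := by
      intro x
      have := congrArg (fun e : Perm (Fin (n + m)) => e x) hpk
      simp only [Equiv.trans_apply] at this
      exact τa.injective this
    have hπ : π = π' := by
      ext i
      have := happ (Fin.castAdd m i)
      rw [eAct_castAdd, eAct_castAdd] at this
      exact congrArg Fin.val (castAdd_injective this)
    have hκ : κ = κ' := by
      ext j
      have := happ (Fin.natAdd n j)
      rw [eAct_natAdd, eAct_natAdd] at this
      exact congrArg Fin.val (natAdd_injective this)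
    rw [hπ, hκ]


section Meas

noncomputable def valfun (n m : ℕ) : (Fin (n + m) → ℝ) → (Fin m → ℝ) := fun x =>
  (fun j : Fin m =>
      (Nat.card {i : Fin n // x (Fin.castAdd m i) ≤ x (Fin.natAdd n j)} : ℝ) / n) ∘
    (Tuple.sort fun j : Fin m =>
      (Nat.card {i : Fin n // x (Fin.castAdd m i) ≤ x (Fin.natAdd n j)} : ℝ) / n)

lemma ncount_eq (x : Fin (n + m) → ℝ) (j : Fin m) :
    Nat.card {i : Fin n // x (Fin.castAdd m i) ≤ x (Fin.natAdd n j)} =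
      (Finset.univ.filter fun i : Fin n => x (Fin.castAdd m i) ≤ x (Fin.natAdd n j)).card := by
  classical
  rw [Nat.card_eq_fintype_card, Fintype.card_subtype]

lemma ncount_le (x : Fin (n + m) → ℝ) (j : Fin m) :
    Nat.card {i : Fin n // x (Fin.castAdd m i) ≤ x (Fin.natAdd n j)} ≤ n := by
  rw [ncount_eq]
  exact le_trans (Finset.card_filter_le _ _) (by simp)

lemma meas_ncount (j : Fin m) :
    Measurable (fun x : Fin (n + m) → ℝ =>
      Nat.card {i : Fin n // x (Fin.castAdd m i) ≤ x (Fin.natAdd n j)}) := by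
  classical
  have : (fun x : Fin (n + m) → ℝ =>
      Nat.card {i : Fin n // x (Fin.castAdd m i) ≤ x (Fin.natAdd n j)}) =
      fun x => ∑ i : Fin n, if x (Fin.castAdd m i) ≤ x (Fin.natAdd n j) then 1 else 0 := by
    funext x
    rw [ncount_eq, Finset.card_filter]
  rw [this]
  refine Finset.measurable_sum _ (fun i _ => ?_)
  exact Measurable.ite
    (measurableSet_le (measurable_pi_apply _) (measurable_pi_apply _))
    measurable_const measurable_const

noncomputable def cfun (n m : ℕ) : (Fin (n + m) → ℝ) → (Fin m → Fin (n + 1)) := fun x j =>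
  ⟨Nat.card {i : Fin n // x (Fin.castAdd m i) ≤ x (Fin.natAdd n j)},
    Nat.lt_succ_of_le (ncount_le x j)⟩

lemma meas_cfun : Measurable (cfun n m) := by
  refine measurable_pi_lambda _ (fun j => ?_)
  refine measurable_to_countable' (fun c => ?_)
  have : ((fun x => cfun n m x j) ⁻¹' {c}) =
      (fun x : Fin (n + m) → ℝ =>
        Nat.card {i : Fin n // x (Fin.castAdd m i) ≤ x (Fin.natAdd n j)}) ⁻¹' {(c : ℕ)} := by
    ext x
    simp only [Set.mem_preimage, Set.mem_singleton_iff, cfun]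
    rw [Fin.ext_iff]
  rw [this]
  exact meas_ncount j (measurableSet_singleton _)

noncomputable def valD (n m : ℕ) : (Fin m → Fin (n + 1)) → (Fin m → ℝ) := fun c =>
  (fun j => ((c j : ℕ) : ℝ) / n) ∘ Tuple.sort (fun j => ((c j : ℕ) : ℝ) / n)

lemma valfun_eq_comp : valfun n m = valD n m ∘ cfun n m := rfl

lemma meas_valfun : Measurable (valfun n m) := by
  rw [valfun_eq_comp]
  exact (Measurable.of_discrete).comp meas_cfun

def Aset (τ : Perm (Fin (n + m))) : Set (Fin (n + m) → ℝ) := {x | StrictMono (x ∘ τ)}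

lemma meas_Aset (τ : Perm (Fin (n + m))) : MeasurableSet (Aset τ) := by
  have : Aset τ = ⋂ (p : Fin (n + m) × Fin (n + m)) (_ : p.1 < p.2),
      {x : Fin (n + m) → ℝ | x (τ p.1) < x (τ p.2)} := by
    ext x
    simp only [Aset, Set.mem_setOf_eq, Set.mem_iInter]
    exact ⟨fun h p hp => h hp, fun h a b hab => h (a, b) hab⟩
  rw [this]
  exact MeasurableSet.iInter fun p => MeasurableSet.iInter fun _ =>
    measurableSet_lt (measurable_pi_apply _) (measurable_pi_apply _)

lemma Aset_eq_of_mem {τ τ' : Perm (Fin (n + m))} {x : Fin (n + m) → ℝ}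
    (hx : x ∈ Aset τ) (hx' : x ∈ Aset τ') : τ = τ' := by
  have hg : StrictMono (x ∘ τ) := hx
  have hg' : StrictMono (x ∘ τ') := hx'
  set h : Fin (n + m) → Fin (n + m) := fun k => τ.symm (τ' k) with hh
  have hgh : ∀ k, (x ∘ τ') k = (x ∘ τ) (h k) := by
    intro k
    simp [hh, Function.comp, Equiv.apply_symm_apply]
  have hhmono : StrictMono h := by
    intro a b hab
    have : (x ∘ τ) (h a) < (x ∘ τ) (h b) := by
      rw [← hgh, ← hgh]
      exact hg' hab
    exact hg.lt_iff_lt.mp this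
  have hrange : Set.range h = Set.range (id : Fin (n + m) → Fin (n + m)) := by
    rw [Set.range_id]
    exact (Equiv.surjective (τ'.trans τ.symm)).range_eq
  have hid : h = id := by
    have hw : WellFoundedLT (Fin (n + m)) := inferInstance
    have hr := @StrictMono.range_inj (Fin (n + m)) (Fin (n + m)) _ _ hw h id
      hhmono strictMono_id
    exact hr.mp hrange
  ext k
  have : τ.symm (τ' k) = k := congrFun hid k
  have := congrArg τ this
  rw [Equiv.apply_symm_apply] at this
  rw [this]

lemma mem_Aset_sort {x : Fin (n + m) → ℝ} (hx : Function.Injective x) :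
    x ∈ Aset (Tuple.sort x) :=
  (Tuple.monotone_sort x).strictMono_of_injective (hx.comp (Tuple.sort x).injective)

lemma valfun_eq_F {τ : Perm (Fin (n + m))} {x : Fin (n + m) → ℝ} (hx : x ∈ Aset τ) :
    valfun n m x = F τ.symm := by
  have hg : StrictMono (x ∘ τ) := hx
  have hxinj : Function.Injective x := by
    intro a b hab
    have : (x ∘ τ) (τ.symm a) = (x ∘ τ) (τ.symm b) := by
      simp [Function.comp, Equiv.apply_symm_apply, hab]
    have := hg.injective this
    have := congrArg τ this
    simpa [Equiv.apply_symm_apply] using this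
  have hiff : ∀ (i : Fin n) (j : Fin m),
      (x (Fin.castAdd m i) ≤ x (Fin.natAdd n j)) ↔
        (τ.symm (Fin.castAdd m i) < τ.symm (Fin.natAdd n j)) := by
    intro i j
    have h1 : x (Fin.castAdd m i) = (x ∘ τ) (τ.symm (Fin.castAdd m i)) := by
      simp [Function.comp, Equiv.apply_symm_apply]
    have h2 : x (Fin.natAdd n j) = (x ∘ τ) (τ.symm (Fin.natAdd n j)) := by
      simp [Function.comp, Equiv.apply_symm_apply]
    rw [h1, h2, hg.le_iff_le]
    constructor
    · intro hle
      refine lt_of_le_of_ne hle ?_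
      intro heq
      exact castAdd_ne_natAdd i j (τ.symm.injective heq)
    · exact le_of_lt
  have hcard : ∀ j : Fin m,
      Nat.card {i : Fin n // x (Fin.castAdd m i) ≤ x (Fin.natAdd n j)} = cnt τ.symm j := by
    intro j
    rw [ncount_eq]
    unfold cnt
    congr 1
    ext i
    simp only [Finset.mem_filter, Finset.mem_univ, true_and]
    exact hiff i j
  have hfun : (fun j : Fin m =>
      (Nat.card {i : Fin n // x (Fin.castAdd m i) ≤ x (Fin.natAdd n j)} : ℝ) / n)
      = pval τ.symm := by
    funext j
    rw [hcard j]
    rfl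
  show ((fun j : Fin m =>
      (Nat.card {i : Fin n // x (Fin.castAdd m i) ≤ x (Fin.natAdd n j)} : ℝ) / n) ∘
    (Tuple.sort fun j : Fin m =>
      (Nat.card {i : Fin n // x (Fin.castAdd m i) ≤ x (Fin.natAdd n j)} : ℝ) / n)) = F τ.symm
  rw [hfun]
  rfl

end Meas

end OPU



/-- Let `S_1,...,S_{n+m}` be exchangeable real-valued random variables with no ties
almost surely, and define `p_j = (1/n) · #{i ∈ {1,...,n} : S_{n+j} ≥ S_i}` for
`j ∈ {1,...,m}`. Then the vector of ordered p-values `(p_(1),...,p_(m))` (obtained via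
the sorting permutation `Tuple.sort`) is uniformly distributed on
`A_{n,m} = {a ∈ {i/n : 0 ≤ i ≤ n}^m : a_1 ≤ ... ≤ a_m}`. -/
theorem ordered_pvalues_uniform {Ω : Type*} [MeasurableSpace Ω] (μ : Measure Ω)
    [IsProbabilityMeasure μ] (n m : ℕ) (hn : 0 < n) (hm : 0 < m)
    (S : Fin (n + m) → Ω → ℝ) (hmeas : ∀ i, Measurable (S i))
    (hexch : ∀ σ : Equiv.Perm (Fin (n + m)),
      Measure.map (fun ω => fun i => S (σ i) ω) μ = Measure.map (fun ω => fun i => S i ω) μ)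
    (hties : ∀ i j, i ≠ j → μ {ω | S i ω = S j ω} = 0) :
    Measure.map
        (fun ω =>
          (fun j : Fin m =>
              (Nat.card {i : Fin n // S (Fin.castAdd m i) ω ≤ S (Fin.natAdd n j) ω} : ℝ) / n) ∘
            (Tuple.sort fun j : Fin m =>
              (Nat.card {i : Fin n // S (Fin.castAdd m i) ω ≤ S (Fin.natAdd n j) ω} : ℝ) / n))
        μ
      = Measure.map
          (fun a : {f : Fin m → Fin (n + 1) // Monotone f} =>
            fun j : Fin m => ((a.1 j : ℕ) : ℝ) / n)
          (PMF.uniformOfFintype {f : Fin m → Fin (n + 1) // Monotone f}).toMeasure := by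
  classical
  have hSvec : Measurable (fun ω => fun i => S i ω) := measurable_pi_lambda _ hmeas
  set ν : Measure (Fin (n + m) → ℝ) := Measure.map (fun ω => fun i => S i ω) μ with hν
  have hprob : IsProbabilityMeasure ν := Measure.isProbabilityMeasure_map hSvec.aemeasurable
  have hbig : (fun ω =>
      (fun j : Fin m =>
          (Nat.card {i : Fin n // S (Fin.castAdd m i) ω ≤ S (Fin.natAdd n j) ω} : ℝ) / n) ∘
        (Tuple.sort fun j : Fin m =>
          (Nat.card {i : Fin n // S (Fin.castAdd m i) ω ≤ S (Fin.natAdd n j) ω} : ℝ) / n))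
      = OPU.valfun n m ∘ (fun ω => fun i => S i ω) := rfl
  rw [hbig, ← Measure.map_map OPU.meas_valfun hSvec, ← hν]
  -- exchangeability at the level of ν
  have hνexch : ∀ σ : Equiv.Perm (Fin (n + m)),
      Measure.map (fun x : Fin (n + m) → ℝ => x ∘ σ) ν = ν := by
    intro σ
    have hcomp : Measurable (fun x : Fin (n + m) → ℝ => x ∘ ⇑σ) :=
      measurable_pi_lambda _ (fun i => measurable_pi_apply _)
    rw [hν, Measure.map_map hcomp hSvec]
    have : ((fun x : Fin (n + m) → ℝ => x ∘ ⇑σ) ∘ (fun ω => fun i => S i ω))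
        = (fun ω => fun i => S (σ i) ω) := rfl
    rw [this]
    exact hexch σ
  have hAν : ∀ τ : Equiv.Perm (Fin (n + m)),
      ν (OPU.Aset τ) = ν (OPU.Aset (1 : Equiv.Perm (Fin (n + m)))) := by
    intro τ
    have hcomp : Measurable (fun x : Fin (n + m) → ℝ => x ∘ ⇑τ) :=
      measurable_pi_lambda _ (fun i => measurable_pi_apply _)
    have hpre : OPU.Aset τ =
        (fun x : Fin (n + m) → ℝ => x ∘ ⇑τ) ⁻¹' OPU.Aset (1 : Equiv.Perm (Fin (n + m))) := by
      ext x
      simp only [OPU.Aset, Set.mem_setOf_eq, Set.mem_preimage]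
      rw [show ((x ∘ ⇑τ) ∘ ⇑(1 : Equiv.Perm (Fin (n + m)))) = x ∘ ⇑τ from rfl]
    rw [hpre, ← Measure.map_apply hcomp (OPU.meas_Aset _), hνexch τ]
  have hninj : ν {x : Fin (n + m) → ℝ | ¬ Function.Injective x} = 0 := by
    have hsub : {x : Fin (n + m) → ℝ | ¬ Function.Injective x} ⊆
        ⋃ (p : Fin (n + m) × Fin (n + m)) (_ : p.1 ≠ p.2),
          {x : Fin (n + m) → ℝ | x p.1 = x p.2} := by
      intro x hx
      simp only [Set.mem_setOf_eq, Function.Injective] at hx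
      push_neg at hx
      obtain ⟨i, j, hval, hne⟩ := hx
      exact Set.mem_iUnion.mpr ⟨(i, j), Set.mem_iUnion.mpr ⟨hne, hval⟩⟩
    refine measure_mono_null hsub (measure_iUnion_null fun p => measure_iUnion_null fun hp => ?_)
    have hms : MeasurableSet {x : Fin (n + m) → ℝ | x p.1 = x p.2} :=
      measurableSet_eq_fun (measurable_pi_apply _) (measurable_pi_apply _)
    rw [hν, Measure.map_apply hSvec hms]
    exact hties p.1 p.2 hp
  have hcover : ν (⋃ τ : Equiv.Perm (Fin (n + m)), OPU.Aset τ)ᶜ = 0 := by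
    refine measure_mono_null ?_ hninj
    intro x hx
    simp only [Set.mem_compl_iff, Set.mem_iUnion] at hx
    intro hinj
    exact hx ⟨Tuple.sort x, OPU.mem_Aset_sort hinj⟩
  have hdisj : Pairwise (Function.onFun Disjoint (fun τ : Equiv.Perm (Fin (n + m)) => OPU.Aset τ)) := by
    intro τ τ' hne
    rw [Function.onFun, Set.disjoint_left]
    intro x hx hx'
    exact hne (OPU.Aset_eq_of_mem hx hx')
  have huni : ν (⋃ τ : Equiv.Perm (Fin (n + m)), OPU.Aset τ) = 1 := by
    rw [measure_congr (ae_eq_univ.mpr hcover), measure_univ]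
  have hsum : ∑' τ : Equiv.Perm (Fin (n + m)), ν (OPU.Aset τ) = 1 := by
    rw [← measure_iUnion hdisj (fun τ => OPU.meas_Aset τ)]
    exact huni
  have hfacne : ((Nat.factorial (n + m) : ℝ≥0∞)) ≠ 0 := by
    exact_mod_cast (Nat.factorial_pos (n + m)).ne'
  have hfactop : ((Nat.factorial (n + m) : ℝ≥0∞)) ≠ ⊤ := ENNReal.natCast_ne_top _
  have hA1 : ν (OPU.Aset (1 : Equiv.Perm (Fin (n + m)))) = (Nat.factorial (n + m) : ℝ≥0∞)⁻¹ := by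
    have hcnt : ∑' τ : Equiv.Perm (Fin (n + m)), ν (OPU.Aset τ)
        = (Nat.factorial (n + m) : ℝ≥0∞) * ν (OPU.Aset (1 : Equiv.Perm (Fin (n + m)))) := by
      rw [tsum_fintype, Finset.sum_congr rfl (fun τ _ => hAν τ), Finset.sum_const,
        Finset.card_univ, Fintype.card_perm, Fintype.card_fin, nsmul_eq_mul]
    rw [hcnt] at hsum
    calc ν (OPU.Aset (1 : Equiv.Perm (Fin (n + m))))
        = (Nat.factorial (n + m) : ℝ≥0∞)⁻¹ *
          ((Nat.factorial (n + m) : ℝ≥0∞) * ν (OPU.Aset (1 : Equiv.Perm (Fin (n + m))))) := by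
          rw [← mul_assoc, ENNReal.inv_mul_cancel hfacne hfactop, one_mul]
      _ = (Nat.factorial (n + m) : ℝ≥0∞)⁻¹ := by rw [hsum, mul_one]
  have hAll : ∀ τ : Equiv.Perm (Fin (n + m)),
      ν (OPU.Aset τ) = (Nat.factorial (n + m) : ℝ≥0∞)⁻¹ := fun τ => (hAν τ).trans hA1
  -- now compare both measures on a measurable set
  refine Measure.ext (fun s hs => ?_)
  rw [Measure.map_apply OPU.meas_valfun hs,
    Measure.map_apply Measurable.of_discrete hs,
    PMF.toMeasure_uniformOfFintype_apply _ (MeasurableSet.of_discrete)]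
  set E : Set (Fin (n + m) → ℝ) := OPU.valfun n m ⁻¹' s with hE
  have hEmeas : MeasurableSet E := OPU.meas_valfun hs
  have hEA : ∀ τ : Equiv.Perm (Fin (n + m)),
      E ∩ OPU.Aset τ = if OPU.F τ.symm ∈ s then OPU.Aset τ else (∅ : Set _) := by
    intro τ
    split_ifs with h
    · refine Set.inter_eq_right.mpr (fun x hx => ?_)
      show OPU.valfun n m x ∈ s
      rw [OPU.valfun_eq_F hx]
      exact h
    · refine Set.eq_empty_iff_forall_notMem.mpr ?_
      rintro x ⟨hxE, hxA⟩
      have : OPU.valfun n m x ∈ s := hxE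
      rw [OPU.valfun_eq_F hxA] at this
      exact h this
  have hEcalc : ν E = ∑ τ : Equiv.Perm (Fin (n + m)),
      (if OPU.F τ.symm ∈ s then (Nat.factorial (n + m) : ℝ≥0∞)⁻¹ else 0) := by
    have h1 : ν E = ν (E ∩ ⋃ τ : Equiv.Perm (Fin (n + m)), OPU.Aset τ) :=
      (measure_inter_conull hcover).symm
    rw [h1, Set.inter_iUnion,
      measure_iUnion
        (fun τ τ' hne => ((hdisj hne).mono Set.inter_subset_right Set.inter_subset_right))
        (fun τ => hEmeas.inter (OPU.meas_Aset τ)),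
      tsum_fintype]
    refine Finset.sum_congr rfl (fun τ _ => ?_)
    rw [hEA τ]
    split_ifs with h
    · exact hAll τ
    · exact measure_empty
  have hreidx : ∑ τ : Equiv.Perm (Fin (n + m)),
      (if OPU.F τ.symm ∈ s then (Nat.factorial (n + m) : ℝ≥0∞)⁻¹ else 0)
      = ∑ ρ : Equiv.Perm (Fin (n + m)),
        (if OPU.F ρ ∈ s then (Nat.factorial (n + m) : ℝ≥0∞)⁻¹ else 0) := by
    exact Fintype.sum_equiv (Equiv.inv (Equiv.Perm (Fin (n + m)))) _ _ (fun τ => rfl)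
  rw [hEcalc, hreidx, Finset.sum_ite, Finset.sum_const, Finset.sum_const_zero, add_zero]
  -- combinatorial counting
  set K : ℕ := Nat.factorial n * Nat.factorial m with hK
  set ΦM : Equiv.Perm (Fin (n + m)) → {f : Fin m → Fin (n + 1) // Monotone f} :=
    fun ρ => ⟨OPU.Φ ρ, OPU.monotone_Φ hn ρ⟩ with hΦM
  set hfun : {f : Fin m → Fin (n + 1) // Monotone f} → (Fin m → ℝ) :=
    fun a => fun j : Fin m => ((a.1 j : ℕ) : ℝ) / n with hhfun
  set B : Finset {f : Fin m → Fin (n + 1) // Monotone f} :=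
    Finset.univ.filter (fun a => hfun a ∈ s) with hB
  have hmemiff : ∀ ρ : Equiv.Perm (Fin (n + m)), OPU.F ρ ∈ s ↔ ΦM ρ ∈ B := by
    intro ρ
    have : OPU.F ρ = hfun (ΦM ρ) := OPU.F_eq ρ
    rw [this, hB]
    simp only [Finset.mem_filter, Finset.mem_univ, true_and]
  have hfib : ∀ b : {f : Fin m → Fin (n + 1) // Monotone f},
      (Finset.univ.filter fun ρ : Equiv.Perm (Fin (n + m)) => ΦM ρ = b).card = K := by
    intro b
    rw [show (Finset.univ.filter fun ρ : Equiv.Perm (Fin (n + m)) => ΦM ρ = b)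
        = Finset.univ.filter fun ρ : Equiv.Perm (Fin (n + m)) => OPU.Φ ρ = b.1 from by
      ext ρ; simp [hΦM, Subtype.ext_iff]]
    exact OPU.fiber_card hn b.1 b.2
  have hPB : (Finset.univ.filter fun ρ : Equiv.Perm (Fin (n + m)) => OPU.F ρ ∈ s).card
      = B.card * K := by
    rw [show (Finset.univ.filter fun ρ : Equiv.Perm (Fin (n + m)) => OPU.F ρ ∈ s)
        = Finset.univ.filter fun ρ : Equiv.Perm (Fin (n + m)) => ΦM ρ ∈ B from by
      ext ρ; simp only [Finset.mem_filter, Finset.mem_univ, true_and]; exact hmemiff ρ]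
    rw [Finset.card_eq_sum_card_fiberwise
      (f := ΦM) (s := Finset.univ.filter fun ρ : Equiv.Perm (Fin (n + m)) => ΦM ρ ∈ B) (t := B) (fun ρ hρ => (Finset.mem_filter.mp hρ).2)]
    have : ∀ b ∈ B, ((Finset.univ.filter fun ρ : Equiv.Perm (Fin (n + m)) => ΦM ρ ∈ B).filter
        fun ρ => ΦM ρ = b).card = K := by
      intro b hb
      rw [show ((Finset.univ.filter fun ρ : Equiv.Perm (Fin (n + m)) => ΦM ρ ∈ B).filter
          fun ρ => ΦM ρ = b) = Finset.univ.filter fun ρ : Equiv.Perm (Fin (n + m)) => ΦM ρ = b from by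
        ext ρ
        simp only [Finset.mem_filter, Finset.mem_univ, true_and]
        constructor
        · rintro ⟨-, h⟩; exact h
        · intro h; exact ⟨h ▸ hb, h⟩]
      exact hfib b
    rw [Finset.sum_congr rfl this, Finset.sum_const, smul_eq_mul]
  have hNK : Nat.factorial (n + m) = Fintype.card {f : Fin m → Fin (n + 1) // Monotone f} * K := by
    have h0 : (Finset.univ : Finset (Equiv.Perm (Fin (n + m)))).card
        = ∑ b : {f : Fin m → Fin (n + 1) // Monotone f},
          (Finset.univ.filter fun ρ : Equiv.Perm (Fin (n + m)) => ΦM ρ = b).card :=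
      Finset.card_eq_sum_card_fiberwise (fun ρ _ => Finset.mem_univ _)
    rw [Finset.card_univ, Fintype.card_perm, Fintype.card_fin] at h0
    rw [h0, Finset.sum_congr rfl (fun b _ => hfib b), Finset.sum_const, Finset.card_univ,
      smul_eq_mul]
  have hcardB : (Fintype.card ↥(hfun ⁻¹' s)) = B.card := by
    have h1 : Fintype.card ↥(hfun ⁻¹' s) = Fintype.card {a // hfun a ∈ s} :=
      Fintype.card_congr (Equiv.subtypeEquivRight (fun a => Iff.rfl))
    rw [h1, Fintype.card_subtype]
  -- final arithmetic
  rw [hPB, hcardB]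
  have hKne : (K : ℝ≥0∞) ≠ 0 := by
    rw [hK]
    exact_mod_cast (Nat.mul_pos (Nat.factorial_pos n) (Nat.factorial_pos m)).ne'
  have hKtop : (K : ℝ≥0∞) ≠ ⊤ := ENNReal.natCast_ne_top _
  have hCMne : ((Fintype.card {f : Fin m → Fin (n + 1) // Monotone f} : ℝ≥0∞)) ≠ 0 := by
    exact_mod_cast (@Fintype.card_pos {f : Fin m → Fin (n + 1) // Monotone f} _ _).ne'
  have hCMtop : ((Fintype.card {f : Fin m → Fin (n + 1) // Monotone f} : ℝ≥0∞)) ≠ ⊤ :=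
    ENNReal.natCast_ne_top _
  rw [nsmul_eq_mul, hNK]
  push_cast
  rw [ENNReal.mul_inv (Or.inl hCMne) (Or.inl hCMtop)]
  rw [show ((B.card : ℝ≥0∞) * (K : ℝ≥0∞)) *
      (((Fintype.card {f : Fin m → Fin (n + 1) // Monotone f} : ℝ≥0∞))⁻¹ * ((K : ℝ≥0∞))⁻¹)
      = ((B.card : ℝ≥0∞) * ((Fintype.card {f : Fin m → Fin (n + 1) // Monotone f} : ℝ≥0∞))⁻¹) *
        ((K : ℝ≥0∞) * ((K : ℝ≥0∞))⁻¹) from by ring]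
  rw [ENNReal.mul_inv_cancel hKne hKtop, mul_one, div_eq_mul_inv]
end

section
/- Let C_1,...,C_m be random subsets of {1,...,K} with P(y ∈ C_j) ≥ 1 - α for each j. Then the majority vote set C^M = { y : sum_{j=1}^m 1{y ∈ C_j} ≥ m/2 } satisfies P(y ∈ C^M) ≥ 1 - 2α. -/
open MeasureTheory
open ENNReal

/-- Let `C_1,...,C_m` be random subsets of `{1,...,K}` with `P(y ∈ C_j) ≥ 1 - α` for each
`j`. Then the majority vote set `C^M = {y : ∑_j 1{y ∈ C_j} ≥ m/2}` satisfies
`P(y ∈ C^M) ≥ 1 - 2α`. -/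
theorem majority_vote_coverage {Ω : Type*} [MeasurableSpace Ω] (ℙ : Measure Ω)
    [IsProbabilityMeasure ℙ] (K m : ℕ) (C : Fin m → Ω → Finset (Fin K)) (y : Fin K)
    (α : ℝ) (hα : 0 ≤ α)
    (hmeas : ∀ j, MeasurableSet {ω | y ∈ C j ω})
    (hcov : ∀ j, ENNReal.ofReal (1 - α) ≤ ℙ {ω | y ∈ C j ω}) :
    ENNReal.ofReal (1 - 2 * α) ≤
      ℙ {ω | (m : ℝ) / 2 ≤ ((Finset.univ.filter fun j => y ∈ C j ω).card : ℝ)} := by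
  by_cases hsmall : 1 - 2 * α ≤ 0
  · rw [ENNReal.ofReal_eq_zero.mpr hsmall]
    exact zero_le
  push_neg at hsmall
  set S : Set Ω := {ω | (m : ℝ) / 2 ≤ ((Finset.univ.filter fun j => y ∈ C j ω).card : ℝ)} with hS
  -- measurability of the hit-count function
  have hcount : Measurable fun ω => ((Finset.univ.filter fun j => y ∈ C j ω).card : ℝ) := by
    have : (fun ω => ((Finset.univ.filter fun j => y ∈ C j ω).card : ℝ))
        = fun ω => ∑ j : Fin m, if y ∈ C j ω then (1:ℝ) else 0 := by
      funext ω
      rw [Finset.card_filter]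
      push_cast [apply_ite (Nat.cast : ℕ → ℝ)]
      rfl
    rw [this]
    exact Finset.measurable_sum _ fun j _ => Measurable.ite (hmeas j) measurable_const measurable_const
  have hSmeas : MeasurableSet S := hcount measurableSet_Ici
  rcases Nat.eq_zero_or_pos m with hm | hm
  · have : S = Set.univ := by
      ext ω
      simp [hS, hm]
    rw [this, measure_univ]
    exact ENNReal.ofReal_le_one.mpr (by linarith)
  -- miss events
  set A : Fin m → Set Ω := fun j => {ω | y ∈ C j ω}ᶜ with hA
  have hAmeas : ∀ j, MeasurableSet (A j) := fun j => (hmeas j).compl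
  have hAle : ∀ j, ℙ (A j) ≤ ENNReal.ofReal α := by
    intro j
    have h1 : ℙ (A j) = 1 - ℙ {ω | y ∈ C j ω} := by
      rw [hA, measure_compl (hmeas j) (measure_ne_top _ _), measure_univ]
    rw [h1]
    refine le_trans (tsub_le_tsub_left (hcov j) 1) ?_
    rw [tsub_le_iff_right]
    calc (1 : ℝ≥0∞) = ENNReal.ofReal (α + (1 - α)) := by norm_num
    _ ≤ ENNReal.ofReal α + ENNReal.ofReal (1 - α) := ENNReal.ofReal_add_le
  -- miss-count function
  set g : Ω → ℝ≥0∞ := fun ω => ∑ j : Fin m, (A j).indicator (fun _ => (1:ℝ≥0∞)) ω with hg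
  have hgmeas : Measurable g :=
    Finset.measurable_sum _ fun j _ => (measurable_const.indicator (hAmeas j))
  have hgint : ∫⁻ ω, g ω ∂ℙ ≤ (m : ℝ≥0∞) * ENNReal.ofReal α := by
    rw [hg]
    rw [lintegral_finset_sum _ fun j _ => measurable_const.indicator (hAmeas j)]
    calc ∑ j : Fin m, ∫⁻ ω, (A j).indicator (fun _ => (1:ℝ≥0∞)) ω ∂ℙ
        = ∑ j : Fin m, ℙ (A j) := by
          refine Finset.sum_congr rfl fun j _ => ?_
          exact lintegral_indicator_one (hAmeas j)
    _ ≤ ∑ _j : Fin m, ENNReal.ofReal α := Finset.sum_le_sum fun j _ => hAle j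
    _ = (m : ℝ≥0∞) * ENNReal.ofReal α := by simp [mul_comm]
  -- complement of S is contained in the Markov event
  have hsub : Sᶜ ⊆ {ω | ENNReal.ofReal ((m:ℝ)/2) ≤ g ω} := by
    intro ω hω
    simp only [hS, Set.mem_compl_iff, Set.mem_setOf_eq, not_le] at hω
    have hcards : (Finset.univ.filter fun j => y ∈ C j ω).card
        + (Finset.univ.filter fun j => y ∉ C j ω).card = m := by
      rw [Finset.card_filter_add_card_filter_not]
      simp
    have hgval : g ω = ((Finset.univ.filter fun j => y ∉ C j ω).card : ℝ≥0∞) := by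
      rw [hg]
      simp [Finset.card_filter, Set.indicator_apply, hA, apply_ite (Nat.cast : ℕ → ℝ≥0∞)]
    have : (m:ℝ)/2 ≤ ((Finset.univ.filter fun j => y ∉ C j ω).card : ℝ) := by
      have := hcards
      have h2 : ((Finset.univ.filter fun j => y ∈ C j ω).card : ℝ)
          + ((Finset.univ.filter fun j => y ∉ C j ω).card : ℝ) = m := by exact_mod_cast this
      linarith
    rw [Set.mem_setOf_eq, hgval]
    calc ENNReal.ofReal ((m:ℝ)/2) ≤ ENNReal.ofReal ((Finset.univ.filter fun j => y ∉ C j ω).card : ℝ) :=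
          ENNReal.ofReal_le_ofReal this
    _ = _ := ENNReal.ofReal_natCast _
  -- Markov
  have hmarkov : ENNReal.ofReal ((m:ℝ)/2) * ℙ Sᶜ ≤ (m : ℝ≥0∞) * ENNReal.ofReal α := by
    calc ENNReal.ofReal ((m:ℝ)/2) * ℙ Sᶜ
        ≤ ENNReal.ofReal ((m:ℝ)/2) * ℙ {ω | ENNReal.ofReal ((m:ℝ)/2) ≤ g ω} :=
          mul_le_mul_right (measure_mono hsub) _
    _ ≤ ∫⁻ ω, g ω ∂ℙ := mul_meas_ge_le_lintegral hgmeas _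
    _ ≤ _ := hgint
  have hne0 : ENNReal.ofReal ((m:ℝ)/2) ≠ 0 := by
    simp only [ne_eq, ENNReal.ofReal_eq_zero, not_le]
    positivity
  have hcompl : ℙ Sᶜ ≤ ENNReal.ofReal (2 * α) := by
    rw [← ENNReal.mul_le_mul_iff_right hne0 ENNReal.ofReal_ne_top]
    refine hmarkov.trans_eq ?_
    rw [← ENNReal.ofReal_mul (by positivity)]
    rw [← ENNReal.ofReal_natCast m, ← ENNReal.ofReal_mul (by positivity)]
    ring_nf
  have hfinal : ℙ S = 1 - ℙ Sᶜ := by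
    rw [measure_compl hSmeas (measure_ne_top _ _), measure_univ]
    rw [ENNReal.sub_sub_cancel one_ne_top prob_le_one]
  rw [hfinal]
  refine le_trans ?_ (tsub_le_tsub_left hcompl 1)
  refine ENNReal.le_sub_of_add_le_right ENNReal.ofReal_ne_top ?_
  calc ENNReal.ofReal (1 - 2 * α) + ENNReal.ofReal (2 * α)
      = ENNReal.ofReal (1 - 2 * α + 2 * α) := (ENNReal.ofReal_add (by linarith) (by positivity)).symm
  _ ≤ 1 := by norm_num
end

section
/- Let β follow BetaBin(m, n+1-k_α, k_α) with k_α = ⌊(n+1)α⌋, let Z follow Binomial(m, 1-α') with α' = k_α/(n+1), and let q be the α-quantile of Binomial(m, 1-α). Then P(β < q) ≤ α + d_TV(Binomial(m,1-α'), BetaBin(m, n+1-k_α, k_α)). -/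
open scoped BigOperators

/-- The Binomial pmf. -/
noncomputable def binomPmf (m : ℕ) (p : ℝ) (k : ℕ) : ℝ :=
  (m.choose k : ℝ) * p ^ k * (1 - p) ^ (m - k)

/-- The Beta-Binomial pmf with positive integer parameters. -/
noncomputable def betaBinPmf (m a b k : ℕ) : ℝ :=
  ((k + a - 1).choose k : ℝ) * ((m - k + b - 1).choose (m - k) : ℝ) /
    ((m - 1 + a + b).choose m : ℝ)


lemma hockey (a : ℕ) : ∀ m : ℕ, ∑ j ∈ Finset.range (m+1), (j+a).choose j = (m+a+1).choose m := by
  intro m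
  induction m with
  | zero => simp
  | succ m ih =>
      rw [Finset.sum_range_succ, ih, show m+1+a = m+a+1 by omega]
      exact (Nat.choose_succ_succ (m+a+1) m).symm

lemma refl0 (b M : ℕ) : ∑ k ∈ Finset.range (M+1), (M-k+b).choose (M-k) = (M+b+1).choose M := by
  have h := Finset.sum_range_reflect (fun j => (j+b).choose j) (M+1)
  simp only [Nat.add_sub_cancel] at h
  rw [← hockey b M, ← h]

lemma vanderT : ∀ a b m : ℕ, ∑ k ∈ Finset.range (m+1), (k+a).choose k * (m-k+b).choose (m-k)
    = (m+a+b+1).choose m := by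
  intro a
  induction a with
  | zero =>
      intro b m
      calc ∑ k ∈ Finset.range (m+1), (k+0).choose k * (m-k+b).choose (m-k)
          = ∑ k ∈ Finset.range (m+1), (m-k+b).choose (m-k) :=
            Finset.sum_congr rfl (fun k _ => by simp)
        _ = (m+b+1).choose m := refl0 b m
        _ = (m+0+b+1).choose m := by norm_num
  | succ a ih =>
      intro b m
      have hk : ∀ k, (k+(a+1)).choose k = ∑ j ∈ Finset.range (k+1), (j+a).choose j := by
        intro k; rw [show k+(a+1) = k+a+1 by omega, hockey a k]
      calc ∑ k ∈ Finset.range (m+1), (k+(a+1)).choose k * (m-k+b).choose (m-k)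
          = ∑ k ∈ Finset.Ico 0 (m+1), ∑ j ∈ Finset.Ico 0 (k+1),
              (j+a).choose j * (m-k+b).choose (m-k) := by
            rw [← Finset.range_eq_Ico]
            refine Finset.sum_congr rfl (fun k _ => ?_)
            rw [hk k, Finset.sum_mul, Finset.range_eq_Ico]
        _ = ∑ j ∈ Finset.Ico 0 (m+1), ∑ k ∈ Finset.Ico j (m+1),
              (j+a).choose j * (m-k+b).choose (m-k) := by
            rw [Finset.sum_Ico_Ico_comm]
        _ = ∑ j ∈ Finset.range (m+1), (j+a).choose j * (m-j+(b+1)).choose (m-j) := by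
            rw [← Finset.range_eq_Ico]
            refine Finset.sum_congr rfl (fun j hj => ?_)
            rw [← Finset.mul_sum]
            congr 1
            rw [Finset.sum_Ico_eq_sum_range, show m + 1 - j = (m - j) + 1 by
              exact Nat.succ_sub (Nat.lt_succ_iff.mp (Finset.mem_range.mp hj))]
            calc ∑ i ∈ Finset.range ((m-j)+1), (m-(j+i)+b).choose (m-(j+i))
                = ∑ i ∈ Finset.range ((m-j)+1), ((m-j)-i+b).choose ((m-j)-i) := by
                  refine Finset.sum_congr rfl (fun i _ => ?_)
                  rw [show m - (j+i) = (m-j) - i by omega]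
              _ = ((m-j)+b+1).choose (m-j) := refl0 b (m-j)
        _ = (m+a+(b+1)+1).choose m := ih (b+1) m
        _ = (m+(a+1)+b+1).choose m := by rw [show m+a+(b+1)+1 = m+(a+1)+b+1 by omega]


lemma natA (m k : ℕ) : (k+1) * m.choose (k+1) = m * (m-1).choose k := by
  rcases m with _ | m'
  · simp [Nat.choose_eq_zero_of_lt (Nat.succ_pos k)]
  · simpa [Nat.mul_comm] using (Nat.add_one_mul_choose_eq m' k).symm

lemma natB (m k : ℕ) : (m-k) * m.choose k = m * (m-1).choose k := by
  rcases m with _ | m'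
  · simp
  · calc (m'+1-k) * (m'+1).choose k
        = (m'+1).choose k * ((m'+1) - k) := Nat.mul_comm _ _
      _ = (m'+1).choose (k+1) * (k+1) := (Nat.choose_succ_right_eq (m'+1) k).symm
      _ = (m'+1) * m'.choose k := (Nat.add_one_mul_choose_eq m' k).symm
      _ = (m'+1) * ((m'+1)-1).choose k := by simp

/-- Telescoping term for the derivative of the binomial cdf. -/
noncomputable def gTerm (m : ℕ) (k : ℕ) (p : ℝ) : ℝ :=
  if k = 0 then 0 else (m : ℝ) * ((m-1).choose (k-1) : ℝ) * p ^ (k-1) * (1-p) ^ (m-k)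

lemma hasDeriv_term (m k : ℕ) (p : ℝ) :
    HasDerivAt (fun p => binomPmf m p k) (gTerm m k p - gTerm m (k+1) p) p := by
  have h1 : HasDerivAt (fun p : ℝ => (m.choose k : ℝ) * p ^ k)
      ((m.choose k : ℝ) * ((k : ℝ) * p ^ (k-1))) p := (hasDerivAt_pow k p).const_mul _
  have hs : HasDerivAt (fun p : ℝ => 1 - p) (-1) p := by
    simpa using (hasDerivAt_id p).const_sub 1
  have h2 : HasDerivAt (fun p : ℝ => (1-p) ^ (m-k))
      (((m-k : ℕ) : ℝ) * (1-p) ^ (m-k-1) * (-1)) p := hs.pow (m-k)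
  have h := h1.fun_mul h2
  have hfun : (fun p : ℝ => (m.choose k : ℝ) * p ^ k * (1-p) ^ (m-k))
      = fun p => binomPmf m p k := by
    funext p; rw [binomPmf]
  rw [hfun] at h
  refine h.congr_deriv ?_
  have e1 : gTerm m k p = (m.choose k : ℝ) * ((k:ℝ) * p ^ (k-1)) * (1-p)^(m-k) := by
    rcases k with _ | j
    · simp [gTerm]
    · have := natA m j
      simp only [gTerm, Nat.succ_ne_zero, if_false, Nat.add_sub_cancel]
      have hc : ((m:ℝ)) * ((m-1).choose j : ℝ) = (m.choose (j+1) : ℝ) * ((j:ℝ)+1) := by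
        exact_mod_cast this.symm.trans (Nat.mul_comm (j+1) (m.choose (j+1)))
      calc (m:ℝ) * ((m-1).choose j : ℝ) * p ^ j * (1-p) ^ (m-(j+1))
          = ((m:ℝ) * ((m-1).choose j : ℝ)) * (p ^ j * (1-p) ^ (m-(j+1))) := by ring
        _ = (m.choose (j+1) : ℝ) * (((j:ℝ)+1) * p ^ j) * (1-p)^(m-(j+1)) := by
            rw [hc]; ring
        _ = (m.choose (j+1) : ℝ) * (((j+1:ℕ):ℝ) * p ^ (j+1-1)) * (1-p)^(m-(j+1)) := by
            push_cast; ring_nf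
  have e2 : gTerm m (k+1) p = (m.choose k : ℝ) * p ^ k * (((m-k:ℕ):ℝ) * (1-p)^(m-k-1)) := by
    have := natB m k
    simp only [gTerm, Nat.succ_ne_zero, if_false, Nat.add_sub_cancel]
    have hc : ((m:ℝ)) * ((m-1).choose k : ℝ) = ((m-k:ℕ):ℝ) * (m.choose k : ℝ) := by
      exact_mod_cast this.symm
    have hexp : m - (k+1) = m - k - 1 := by omega
    rw [hexp, hc]; ring
  rw [e1, e2]; ring

lemma binomCdf_hasDeriv (m q : ℕ) (p : ℝ) :
    HasDerivAt (fun p : ℝ => ∑ k ∈ Finset.range q, binomPmf m p k) (- gTerm m q p) p := by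
  have h := HasDerivAt.fun_sum (fun k (_ : k ∈ Finset.range q) => hasDeriv_term m k p)
  rw [Finset.sum_range_sub' (fun k => gTerm m k p)] at h
  simpa [gTerm] using h

lemma binomCdf_anti (m q : ℕ) :
    AntitoneOn (fun p : ℝ => ∑ k ∈ Finset.range q, binomPmf m p k) (Set.Icc 0 1) := by
  have hd : Differentiable ℝ (fun p : ℝ => ∑ k ∈ Finset.range q, binomPmf m p k) :=
    fun p => (binomCdf_hasDeriv m q p).differentiableAt
  apply antitoneOn_of_deriv_nonpos (convex_Icc 0 1) hd.continuous.continuousOn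
    hd.differentiableOn
  intro x hx
  rw [interior_Icc] at hx
  rw [(binomCdf_hasDeriv m q x).deriv, neg_nonpos]
  rcases q with _ | j
  · simp [gTerm]
  · have h0 : (0:ℝ) ≤ x := hx.1.le
    have h1 : (0:ℝ) ≤ 1 - x := by linarith [hx.2]
    simp only [gTerm, Nat.succ_ne_zero, if_false]
    positivity




lemma binom_sum (m : ℕ) (p : ℝ) : ∑ k ∈ Finset.range (m+1), binomPmf m p k = 1 := by
  calc ∑ k ∈ Finset.range (m+1), binomPmf m p k
      = ∑ k ∈ Finset.range (m+1), p ^ k * (1-p) ^ (m-k) * (m.choose k : ℝ) :=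
        Finset.sum_congr rfl (fun k _ => by simp only [binomPmf]; ring)
    _ = (p + (1-p))^m := (add_pow p (1-p) m).symm
    _ = 1 := by norm_num

lemma betaBin_sum (m a b : ℕ) (ha : 1 ≤ a) :
    ∑ k ∈ Finset.range (m+1), betaBinPmf m a b k = 1 := by
  rcases b with _ | b'
  · -- b = 0 : point mass at m
    rw [Finset.sum_range_succ]
    have hz : ∀ k ∈ Finset.range m, betaBinPmf m a 0 k = 0 := by
      intro k hk
      have hk' : k < m := Finset.mem_range.mp hk
      have h0 : (m - k + 0 - 1).choose (m - k) = 0 :=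
        Nat.choose_eq_zero_of_lt (by omega)
      simp only [betaBinPmf, h0, Nat.cast_zero, mul_zero, zero_div]
    rw [Finset.sum_congr rfl hz]
    simp only [Finset.sum_const_zero, zero_add]
    have hnum : (m + a - 1).choose m = (m - 1 + a + 0).choose m := by
      rcases m with _ | m'
      · simp
      · congr 1; omega
    have hpos : 0 < (m - 1 + a + 0).choose m := Nat.choose_pos (by omega)
    simp only [betaBinPmf, Nat.sub_self, Nat.zero_add, Nat.add_zero]
    rw [show (0:ℕ) - 1 = 0 by rfl]
    rw [hnum]
    simp only [Nat.choose_zero_right, Nat.cast_one, mul_one]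
    exact div_self (by exact_mod_cast hpos.ne')
  · -- b = b' + 1
    obtain ⟨a', rfl⟩ : ∃ a', a = a' + 1 := ⟨a - 1, by omega⟩
    have hD : (m - 1 + (a'+1) + (b'+1)).choose m = (m + a' + b' + 1).choose m := by
      rcases m with _ | m'
      · simp
      · congr 1; omega
    have hterm : ∀ k, betaBinPmf m (a'+1) (b'+1) k =
        ((k + a').choose k * ((m - k + b').choose (m - k)) : ℕ) /
          ((m + a' + b' + 1).choose m : ℝ) := by
      intro k
      rw [betaBinPmf, show k + (a'+1) - 1 = k + a' by omega,
        show m - k + (b'+1) - 1 = m - k + b' by omega, hD]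
      push_cast; ring
    rw [Finset.sum_congr rfl (fun k _ => hterm k), ← Finset.sum_div]
    rw [← Nat.cast_sum, vanderT a' b' m]
    exact div_self (by exact_mod_cast (Nat.choose_pos (by omega)).ne')

/-- Let `β ~ BetaBin(m, n+1-k_α, k_α)` with `k_α = ⌊(n+1)α⌋`, let
`Z' ~ Binomial(m, 1-α')` with `α' = k_α/(n+1)`, and let `q` be the `α`-quantile of
`Binomial(m, 1-α)` (the largest value whose cdf strictly below it is `≤ α`). Then
`P(β < q) ≤ α + d_TV(Binomial(m, 1-α'), BetaBin(m, n+1-k_α, k_α))`, where the total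
variation distance is half the `ℓ¹` distance between the pmfs on `{0,...,m}`. -/
theorem quantile_shift_tv_bound (n m : ℕ) (α : ℝ) (hα : α ∈ Set.Ioo (0 : ℝ) 1) (q : ℕ)
    (hq1 : ∑ k ∈ Finset.range q, binomPmf m (1 - α) k ≤ α)
    (hq2 : ∀ r : ℕ, (∑ k ∈ Finset.range r, binomPmf m (1 - α) k) ≤ α → r ≤ q) :
    ∑ k ∈ Finset.range q,
        betaBinPmf m (n + 1 - ⌊((n : ℝ) + 1) * α⌋₊) ⌊((n : ℝ) + 1) * α⌋₊ k
      ≤ α + (1 / 2) * ∑ k ∈ Finset.range (m + 1),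
          |binomPmf m (1 - (⌊((n : ℝ) + 1) * α⌋₊ : ℝ) / ((n : ℝ) + 1)) k -
            betaBinPmf m (n + 1 - ⌊((n : ℝ) + 1) * α⌋₊) ⌊((n : ℝ) + 1) * α⌋₊ k| := by
  obtain ⟨hα0, hα1⟩ := hα
  set K := ⌊((n : ℝ) + 1) * α⌋₊ with hKdef
  set a := n + 1 - K with hadef
  set α' : ℝ := (K : ℝ) / ((n : ℝ) + 1) with hα'def
  have hKn : K ≤ n := by
    have h2 : ((n:ℝ)+1)*α < ((n+1:ℕ):ℝ) := by push_cast; nlinarith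
    have := (Nat.floor_lt (by positivity)).mpr h2
    omega
  have ha1 : 1 ≤ a := by omega
  have hα'0 : 0 ≤ α' := by positivity
  have hα'le : α' ≤ α := by
    rw [hα'def, div_le_iff₀ (by positivity : (0:ℝ) < (n:ℝ)+1)]
    have h := Nat.floor_le (show (0:ℝ) ≤ ((n:ℝ)+1)*α by positivity)
    have h2 : ((n:ℝ)+1)*α = α*((n:ℝ)+1) := mul_comm _ _
    rw [← hKdef] at h
    linarith
  have hx0 : ∀ k, 0 ≤ binomPmf m (1-α') k := by
    intro k; rw [binomPmf]
    have h1 : (0:ℝ) ≤ 1 - α' := by linarith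
    have h2 : (0:ℝ) ≤ 1 - (1 - α') := by linarith
    exact mul_nonneg (mul_nonneg (Nat.cast_nonneg _) (pow_nonneg h1 _)) (pow_nonneg h2 _)
  have hy0 : ∀ k, 0 ≤ betaBinPmf m a K k := by
    intro k; rw [betaBinPmf]; positivity
  have hq : q ≤ m + 1 := by
    by_contra h
    push_neg at h
    have hle : (1:ℝ) ≤ ∑ k ∈ Finset.range q, binomPmf m (1-α) k := by
      calc (1:ℝ) = ∑ k ∈ Finset.range (m+1), binomPmf m (1-α) k := (binom_sum m (1-α)).symm
        _ ≤ ∑ k ∈ Finset.range q, binomPmf m (1-α) k := by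
            refine Finset.sum_le_sum_of_subset_of_nonneg (Finset.range_subset_range.mpr h.le)
              (fun k _ _ => ?_)
            rw [binomPmf]
            have h1 : (0:ℝ) ≤ 1 - α := by linarith
            have h2 : (0:ℝ) ≤ 1 - (1 - α) := by linarith
            exact mul_nonneg (mul_nonneg (Nat.cast_nonneg _) (pow_nonneg h1 _))
              (pow_nonneg h2 _)
    linarith
  have hxq : ∑ k ∈ Finset.range q, binomPmf m (1-α') k ≤ α := by
    have hmem1 : (1-α) ∈ Set.Icc (0:ℝ) 1 := ⟨by linarith, by linarith⟩
    have hmem2 : (1-α') ∈ Set.Icc (0:ℝ) 1 := ⟨by linarith, by linarith⟩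
    have := binomCdf_anti m q hmem1 hmem2 (by linarith : 1-α ≤ 1-α')
    simp only at this
    linarith
  have hsx : ∑ k ∈ Finset.range (m+1), binomPmf m (1-α') k = 1 := binom_sum _ _
  have hsy : ∑ k ∈ Finset.range (m+1), betaBinPmf m a K k = 1 := betaBin_sum m a K ha1
  have hdiff0 : ∑ k ∈ Finset.range (m+1), (betaBinPmf m a K k - binomPmf m (1-α') k) = 0 := by
    rw [Finset.sum_sub_distrib, hsx, hsy]; ring
  have key : ∑ k ∈ Finset.range (m+1), max (betaBinPmf m a K k - binomPmf m (1-α') k) 0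
      ≤ (1/2) * ∑ k ∈ Finset.range (m+1),
          |binomPmf m (1-α') k - betaBinPmf m a K k| := by
    have hmax : ∀ k, max (betaBinPmf m a K k - binomPmf m (1-α') k) 0
        = ((betaBinPmf m a K k - binomPmf m (1-α') k)
            + |binomPmf m (1-α') k - betaBinPmf m a K k|) / 2 := by
      intro k
      rw [abs_sub_comm]
      rcases le_total (betaBinPmf m a K k - binomPmf m (1-α') k) 0 with h | h
      · rw [max_eq_right h, abs_of_nonpos h]; ring
      · rw [max_eq_left h, abs_of_nonneg h]; ring
    rw [Finset.sum_congr rfl (fun k _ => hmax k), ← Finset.sum_div,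
      Finset.sum_add_distrib, hdiff0]
    ring_nf
    linarith [le_refl ((1:ℝ)/2 * ∑ k ∈ Finset.range (m+1),
      |binomPmf m (1-α') k - betaBinPmf m a K k|)]
  calc ∑ k ∈ Finset.range q, betaBinPmf m a K k
      = ∑ k ∈ Finset.range q, binomPmf m (1-α') k
        + ∑ k ∈ Finset.range q, (betaBinPmf m a K k - binomPmf m (1-α') k) := by
        rw [← Finset.sum_add_distrib]
        exact Finset.sum_congr rfl (fun k _ => by ring)
    _ ≤ α + ∑ k ∈ Finset.range q, max (betaBinPmf m a K k - binomPmf m (1-α') k) 0 :=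
        add_le_add hxq (Finset.sum_le_sum (fun k _ => le_max_left _ _))
    _ ≤ α + ∑ k ∈ Finset.range (m+1), max (betaBinPmf m a K k - binomPmf m (1-α') k) 0 :=
        add_le_add_right (Finset.sum_le_sum_of_subset_of_nonneg
          (Finset.range_subset_range.mpr hq) (fun k _ _ => le_max_right _ _)) α
    _ ≤ α + (1/2) * ∑ k ∈ Finset.range (m+1),
          |binomPmf m (1-α') k - betaBinPmf m a K k| := add_le_add_right key α
end
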